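/- Let S ↪ G ↠ H be a groupoid extension, let T be a bundle of abelian groups over the unit space endowed with an H-action, and let φ : S → T be an equivariant group bundle morphism (φ(γ s γ⁻¹) = π(γ)·φ(s) for all composable (γ, s) ∈ G * S). Define T * G = {(t, γ) : p_T(t) = r(γ)} with multiplication (t,γ)(t',γ') = (t·(π(γ)·t'), γγ') and inverse (t,γ)⁻¹ = (π(γ)⁻¹·t⁻¹, γ⁻¹). Then T * G is a groupoid and the map i : S → T * G given by i(s) = (φ(s⁻¹), s) is an injective groupoid homomorphism whose image is a normal subgroupoid of T * G. -/

import Mathlib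

/-- An (algebraic) groupoid with unit space `X` and arrow space `A`.
The multiplication is total, but the axioms only constrain it on
composable pairs, i.e. pairs `(a, b)` with `src a = rng b`
(so `mul a b` corresponds to the product `a b` in the paper,
with `s (a b) = s b` and `r (a b) = r a`). -/
structure Gpd (X : Type*) (A : Type*) where
  src : A → X
  rng : A → X
  mul : A → A → A
  inv : A → A
  unit : X → A
  src_unit : ∀ x, src (unit x) = x
  rng_unit : ∀ x, rng (unit x) = x
  src_mul : ∀ a b, src a = rng b → src (mul a b) = src b
  rng_mul : ∀ a b, src a = rng b → rng (mul a b) = rng a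
  mul_assoc : ∀ a b c, src a = rng b → src b = rng c →
    mul (mul a b) c = mul a (mul b c)
  unit_mul : ∀ a, mul (unit (rng a)) a = a
  mul_unit : ∀ a, mul a (unit (src a)) = a
  src_inv : ∀ a, src (inv a) = rng a
  rng_inv : ∀ a, rng (inv a) = src a
  mul_inv : ∀ a, mul a (inv a) = unit (rng a)
  inv_mul : ∀ a, mul (inv a) a = unit (src a)

/-- A bundle of abelian groups over `X`, with total space `T` and bundle map
`p`.  The (total) operations are only constrained fibrewise. -/
structure GrpBundle (X : Type*) (T : Type*) where
  p : T → X
  mul : T → T → T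
  one : X → T
  inv : T → T
  p_one : ∀ x, p (one x) = x
  p_mul : ∀ s t, p s = p t → p (mul s t) = p s
  p_inv : ∀ t, p (inv t) = p t
  mul_assoc : ∀ s t u, p s = p t → p t = p u →
    mul (mul s t) u = mul s (mul t u)
  mul_comm : ∀ s t, p s = p t → mul s t = mul t s
  one_mul : ∀ t, mul (one (p t)) t = t
  mul_inv : ∀ t, mul t (inv t) = one (p t)

/-- An action of the groupoid `H` on the group bundle `Tb` by group bundle
automorphisms covering the action of `H` on its units: an arrow `b` maps the
fibre over `src b` to the fibre over `rng b`. -/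
structure GpdAction {X B T : Type*} (H : Gpd X B) (Tb : GrpBundle X T) where
  act : B → T → T
  p_act : ∀ b t, Tb.p t = H.src b → Tb.p (act b t) = H.rng b
  act_unit : ∀ t, act (H.unit (Tb.p t)) t = t
  act_comp : ∀ b b' t, H.src b = H.rng b' → Tb.p t = H.src b' →
    act (H.mul b b') t = act b (act b' t)
  act_mul : ∀ b s t, Tb.p s = Tb.p t → Tb.p s = H.src b →
    act b (Tb.mul s t) = Tb.mul (act b s) (act b t)
  act_one : ∀ b, act b (Tb.one (H.src b)) = Tb.one (H.rng b)


section Aux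

variable {X A : Type*}

theorem Gpd.inv_unique (K : Gpd X A) {c a : A}
    (h1 : K.src c = K.rng a) (h2 : K.mul c a = K.unit (K.src a)) :
    c = K.inv a := by
  calc c = K.mul c (K.unit (K.src c)) := (K.mul_unit c).symm
    _ = K.mul c (K.mul a (K.inv a)) := by rw [h1, K.mul_inv]
    _ = K.mul (K.mul c a) (K.inv a) :=
        (K.mul_assoc c a (K.inv a) h1 (K.rng_inv a).symm).symm
    _ = K.mul (K.unit (K.src a)) (K.inv a) := by rw [h2]
    _ = K.inv a := by rw [← K.rng_inv a]; exact K.unit_mul _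

theorem Gpd.inv_inv (K : Gpd X A) (a : A) : K.inv (K.inv a) = a :=
  (K.inv_unique (K.rng_inv a).symm
    (by rw [K.src_inv]; exact K.mul_inv a)).symm

theorem Gpd.unit_sq (K : Gpd X A) (x : X) :
    K.mul (K.unit x) (K.unit x) = K.unit x := by
  have h := K.unit_mul (K.unit x)
  rwa [K.rng_unit] at h

theorem Gpd.inv_unit (K : Gpd X A) (x : X) : K.inv (K.unit x) = K.unit x :=
  (K.inv_unique (by rw [K.src_unit, K.rng_unit])
    (by rw [K.src_unit]; exact K.unit_sq x)).symm

theorem Gpd.inv_mul_rev (K : Gpd X A) {a b : A} (h : K.src a = K.rng b) :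
    K.inv (K.mul a b) = K.mul (K.inv b) (K.inv a) := by
  have hba : K.src (K.inv b) = K.rng (K.inv a) := by
    rw [K.src_inv, K.rng_inv]; exact h.symm
  refine (K.inv_unique ?_ ?_).symm
  · rw [K.src_mul _ _ hba, K.src_inv, K.rng_mul _ _ h]
  · have e1 : K.mul (K.mul (K.inv b) (K.inv a)) (K.mul a b)
        = K.mul (K.inv b) (K.mul (K.inv a) (K.mul a b)) :=
      K.mul_assoc _ _ _ hba (by rw [K.src_inv, K.rng_mul _ _ h])
    have e2 : K.mul (K.inv a) (K.mul a b) = b := by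
      rw [← K.mul_assoc _ _ _ (K.src_inv a) h, K.inv_mul, h, K.unit_mul]
    rw [e1, e2, K.inv_mul, K.src_mul _ _ h]

theorem GrpBundle.mul_one {T : Type*} (Tb : GrpBundle X T) (t : T) :
    Tb.mul t (Tb.one (Tb.p t)) = t := by
  rw [Tb.mul_comm _ _ (Tb.p_one _).symm]; exact Tb.one_mul t

theorem GrpBundle.inv_mul {T : Type*} (Tb : GrpBundle X T) (t : T) :
    Tb.mul (Tb.inv t) t = Tb.one (Tb.p t) := by
  rw [Tb.mul_comm _ _ (Tb.p_inv t)]; exact Tb.mul_inv t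

theorem GrpBundle.inv_unique {T : Type*} (Tb : GrpBundle X T) {u v : T}
    (hp : Tb.p u = Tb.p v) (h : Tb.mul u v = Tb.one (Tb.p v)) :
    u = Tb.inv v := by
  calc u = Tb.mul u (Tb.one (Tb.p u)) := (Tb.mul_one u).symm
    _ = Tb.mul u (Tb.mul v (Tb.inv v)) := by rw [hp, Tb.mul_inv]
    _ = Tb.mul (Tb.mul u v) (Tb.inv v) :=
        (Tb.mul_assoc u v (Tb.inv v) hp (Tb.p_inv v).symm).symm
    _ = Tb.mul (Tb.one (Tb.p v)) (Tb.inv v) := by rw [h]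
    _ = Tb.inv v := by rw [← Tb.p_inv v]; exact Tb.one_mul _

theorem GpdAction.cancel {B T : Type*} {H : Gpd X B} {Tb : GrpBundle X T}
    (ac : GpdAction H Tb) (b : B) (u : T) (h : Tb.p u = H.rng b) :
    ac.act b (ac.act (H.inv b) u) = u := by
  rw [← ac.act_comp b (H.inv b) u (H.rng_inv b).symm (by rw [H.src_inv]; exact h),
    H.mul_inv, ← h, ac.act_unit]

end Aux

/-- `T * G = {(t, γ) : p_T t = r γ}`, with multiplication
`(t,γ)(t',γ') = (t·(π(γ)·t'), γγ')` and inverse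
`(t,γ)⁻¹ = (π(γ)⁻¹·t⁻¹, γ⁻¹)`, is a groupoid, and
`i : S → T * G`, `i s = (φ(s⁻¹), s)`, is an injective groupoid
homomorphism whose image is a normal subgroupoid of `T * G`. -/
theorem stmt2 {X A B T : Type*} (G : Gpd X A) (H : Gpd X B)
    (Tb : GrpBundle X T) (ac : GpdAction H Tb)
    (π : A → B)
    (hsrc : ∀ a, H.src (π a) = G.src a)
    (hrng : ∀ a, H.rng (π a) = G.rng a)
    (hmulπ : ∀ a b, G.src a = G.rng b → π (G.mul a b) = H.mul (π a) (π b))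
    (hunitπ : ∀ x, π (G.unit x) = H.unit x)
    (hsurj : Function.Surjective π)
    (S : Set A) (hker : S = {a | π a = H.unit (G.src a)})
    (hiso : ∀ a ∈ S, G.src a = G.rng a)
    (φ : A → T)
    (hφp : ∀ a ∈ S, Tb.p (φ a) = G.src a)
    (hφmul : ∀ a b, a ∈ S → b ∈ S → G.src a = G.src b →
      φ (G.mul a b) = Tb.mul (φ a) (φ b))
    (hφunit : ∀ x, φ (G.unit x) = Tb.one x)
    (hφequiv : ∀ γ s, s ∈ S → G.rng s = G.src γ →
      φ (G.mul (G.mul γ s) (G.inv γ)) = ac.act (π γ) (φ s)) :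
    ∃ (TG : Gpd X {q : T × A // Tb.p q.1 = G.rng q.2})
      (i : {a : A // a ∈ S} → {q : T × A // Tb.p q.1 = G.rng q.2}),
      (∀ q, TG.src q = G.src q.val.2) ∧
      (∀ q, TG.rng q = G.rng q.val.2) ∧
      (∀ x, (TG.unit x).val = (Tb.one x, G.unit x)) ∧
      (∀ q q', G.src q.val.2 = G.rng q'.val.2 →
        (TG.mul q q').val =
          (Tb.mul q.val.1 (ac.act (π q.val.2) q'.val.1),
            G.mul q.val.2 q'.val.2)) ∧
      (∀ q, (TG.inv q).val =
          (ac.act (H.inv (π q.val.2)) (Tb.inv q.val.1), G.inv q.val.2)) ∧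
      (∀ s, (i s).val = (φ (G.inv s.val), s.val)) ∧
      Function.Injective i ∧
      (∀ s s', G.src s.val = G.src s'.val →
        ∃ s'' : {a : A // a ∈ S}, s''.val = G.mul s.val s'.val ∧
          i s'' = TG.mul (i s) (i s')) ∧
      (∀ s, ∃ s' : {a : A // a ∈ S}, s'.val = G.inv s.val ∧
        i s' = TG.inv (i s)) ∧
      (∀ q w, (∃ s, i s = w) → TG.src w = TG.src q → TG.rng w = TG.src q →
        ∃ s', i s' = TG.mul (TG.mul q w) (TG.inv q)) := by
  classical
  subst hker
  have hinvπ : ∀ a, π (G.inv a) = H.inv (π a) := fun a =>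
    H.inv_unique (by rw [hsrc, G.src_inv, hrng])
      (by rw [← hmulπ _ _ (by rw [G.src_inv]), G.inv_mul, hunitπ, hsrc])
  have hSinv : ∀ a : A, π a = H.unit (G.src a) →
      π (G.inv a) = H.unit (G.src (G.inv a)) := by
    intro a ha
    rw [hinvπ, ha, H.inv_unit, G.src_inv, hiso a ha]
  have hSmul : ∀ a b : A, π a = H.unit (G.src a) → π b = H.unit (G.src b) →
      G.src a = G.rng b →
      π (G.mul a b) = H.unit (G.src (G.mul a b)) := by
    intro a b ha hb hab
    rw [hmulπ a b hab, ha, hb, G.src_mul a b hab, hab, ← hiso b hb]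
    exact H.unit_sq _
  have pmul : ∀ q q' : {q : T × A // Tb.p q.1 = G.rng q.2},
      G.src q.val.2 = G.rng q'.val.2 →
      Tb.p (Tb.mul q.val.1 (ac.act (π q.val.2) q'.val.1))
        = G.rng (G.mul q.val.2 q'.val.2) := by
    intro q q' h
    have h1 : Tb.p q'.val.1 = H.src (π q.val.2) := by
      rw [hsrc]; exact q'.prop.trans h.symm
    have h2 : Tb.p (ac.act (π q.val.2) q'.val.1) = H.rng (π q.val.2) :=
      ac.p_act _ _ h1
    rw [Tb.p_mul _ _ (by rw [h2, hrng]; exact q.prop), G.rng_mul _ _ h]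
    exact q.prop
  have pinv : ∀ q : {q : T × A // Tb.p q.1 = G.rng q.2},
      Tb.p (ac.act (H.inv (π q.val.2)) (Tb.inv q.val.1))
        = G.rng (G.inv q.val.2) := by
    intro q
    rw [ac.p_act _ _ (by rw [H.src_inv, Tb.p_inv, hrng]; exact q.prop),
      H.rng_inv, hsrc, G.rng_inv]
  let TG : Gpd X {q : T × A // Tb.p q.1 = G.rng q.2} :=
  { src := fun q => G.src q.val.2
    rng := fun q => G.rng q.val.2
    mul := fun q q' =>
      if h : G.src q.val.2 = G.rng q'.val.2 then
        ⟨(Tb.mul q.val.1 (ac.act (π q.val.2) q'.val.1),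
          G.mul q.val.2 q'.val.2), pmul q q' h⟩
      else q
    inv := fun q =>
      ⟨(ac.act (H.inv (π q.val.2)) (Tb.inv q.val.1), G.inv q.val.2), pinv q⟩
    unit := fun x => ⟨(Tb.one x, G.unit x), by rw [Tb.p_one, G.rng_unit]⟩
    src_unit := fun x => G.src_unit x
    rng_unit := fun x => G.rng_unit x
    src_mul := by
      intro a b h
      rw [dif_pos h]
      exact G.src_mul _ _ h
    rng_mul := by
      intro a b h
      rw [dif_pos h]
      exact G.rng_mul _ _ h
    mul_assoc := by
      intro a b c hab hbc
      have h1 : G.src (G.mul a.val.2 b.val.2) = G.rng c.val.2 := by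
        rw [G.src_mul _ _ hab]; exact hbc
      have h2 : G.src a.val.2 = G.rng (G.mul b.val.2 c.val.2) := by
        rw [G.rng_mul _ _ hbc]; exact hab
      rw [dif_pos hab, dif_pos hbc]
      dsimp only
      rw [dif_pos h1, dif_pos h2]
      apply Subtype.ext
      dsimp only
      have pa := a.prop
      have pb := b.prop
      have pc := c.prop
      have hπab : π (G.mul a.val.2 b.val.2) = H.mul (π a.val.2) (π b.val.2) :=
        hmulπ _ _ hab
      have hpc : Tb.p c.val.1 = H.src (π b.val.2) := by
        rw [hsrc]; exact pc.trans hbc.symm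
      have e3 : ac.act (π (G.mul a.val.2 b.val.2)) c.val.1
          = ac.act (π a.val.2) (ac.act (π b.val.2) c.val.1) := by
        rw [hπab]
        exact ac.act_comp _ _ _ (by rw [hsrc, hrng]; exact hab) hpc
      have hpb : Tb.p b.val.1 = H.src (π a.val.2) := by
        rw [hsrc]; exact pb.trans hab.symm
      have hpbc : Tb.p b.val.1 = Tb.p (ac.act (π b.val.2) c.val.1) := by
        rw [ac.p_act _ _ hpc, hrng]; exact pb
      have e4 : ac.act (π a.val.2) (Tb.mul b.val.1 (ac.act (π b.val.2) c.val.1))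
          = Tb.mul (ac.act (π a.val.2) b.val.1)
              (ac.act (π a.val.2) (ac.act (π b.val.2) c.val.1)) :=
        ac.act_mul _ _ _ hpbc hpb
      have hpab1 : Tb.p a.val.1 = Tb.p (ac.act (π a.val.2) b.val.1) := by
        rw [ac.p_act _ _ hpb, hrng]; exact pa
      have hpc2 : Tb.p c.val.1 = H.src (π (G.mul a.val.2 b.val.2)) := by
        rw [hsrc, G.src_mul _ _ hab]; exact pc.trans hbc.symm
      have hpab2 : Tb.p (ac.act (π a.val.2) b.val.1)
          = Tb.p (ac.act (π (G.mul a.val.2 b.val.2)) c.val.1) := by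
        rw [ac.p_act _ _ hpb, ac.p_act _ _ hpc2, hrng, hrng, G.rng_mul _ _ hab]
      refine Prod.ext ?_ (G.mul_assoc _ _ _ hab hbc)
      dsimp only
      rw [Tb.mul_assoc _ _ _ hpab1 hpab2, e3, ← e4]
    unit_mul := by
      intro a
      dsimp only
      rw [dif_pos (G.src_unit _)]
      apply Subtype.ext
      refine Prod.ext ?_ (G.unit_mul _)
      dsimp only
      rw [hunitπ, ← a.prop, ac.act_unit]
      exact Tb.one_mul _
    mul_unit := by
      intro a
      dsimp only
      rw [dif_pos (G.rng_unit _).symm]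
      apply Subtype.ext
      refine Prod.ext ?_ (G.mul_unit _)
      dsimp only
      have e : ac.act (π a.val.2) (Tb.one (G.src a.val.2))
          = Tb.one (G.rng a.val.2) := by
        rw [← hsrc, ac.act_one, hrng]
      rw [e, ← a.prop]
      exact Tb.mul_one _
    src_inv := fun a => G.src_inv a.val.2
    rng_inv := fun a => G.rng_inv a.val.2
    mul_inv := by
      intro a
      dsimp only
      rw [dif_pos (G.rng_inv _).symm]
      apply Subtype.ext
      refine Prod.ext ?_ (G.mul_inv _)
      dsimp only
      rw [ac.cancel _ _ (by rw [Tb.p_inv, hrng]; exact a.prop), Tb.mul_inv,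
        a.prop]
    inv_mul := by
      intro a
      dsimp only
      rw [dif_pos (G.src_inv _)]
      apply Subtype.ext
      refine Prod.ext ?_ (G.inv_mul _)
      dsimp only
      rw [hinvπ, ← ac.act_mul _ _ _ (Tb.p_inv a.val.1)
        (by rw [Tb.p_inv, H.src_inv, hrng]; exact a.prop),
        Tb.inv_mul, a.prop, ← hrng, ← H.src_inv, ac.act_one, H.rng_inv, hsrc] }
  have key : ∀ (q q' : {q : T × A // Tb.p q.1 = G.rng q.2})
      (h : G.src q.val.2 = G.rng q'.val.2),
      TG.mul q q' = ⟨(Tb.mul q.val.1 (ac.act (π q.val.2) q'.val.1),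
        G.mul q.val.2 q'.val.2), pmul q q' h⟩ :=
    fun q q' h => dif_pos h
  let i : {a : A // a ∈ {a : A | π a = H.unit (G.src a)}} →
      {q : T × A // Tb.p q.1 = G.rng q.2} := fun s =>
    ⟨(φ (G.inv s.val), s.val), by rw [hφp _ (hSinv _ s.prop), G.src_inv]⟩
  refine ⟨TG, i, fun _ => rfl, fun _ => rfl, fun _ => rfl,
    fun q q' h => by rw [key q q' h], fun _ => rfl, fun _ => rfl, ?_, ?_, ?_, ?_⟩
  · -- injectivity
    intro s s' h
    apply Subtype.ext
    exact congrArg (fun q => q.val.2) h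
  · -- closure under multiplication
    intro s s' hss'
    have hcomp : G.src s.val = G.rng s'.val := hss'.trans (hiso _ s'.prop)
    refine ⟨⟨G.mul s.val s'.val, hSmul _ _ s.prop s'.prop hcomp⟩, rfl, ?_⟩
    rw [key (i s) (i s') hcomp]
    apply Subtype.ext
    refine Prod.ext ?_ rfl
    dsimp only [i]
    have e1 : ac.act (π s.val) (φ (G.inv s'.val)) = φ (G.inv s'.val) := by
      have hp : Tb.p (φ (G.inv s'.val)) = G.src s.val := by
        rw [hφp _ (hSinv _ s'.prop), G.src_inv, ← hiso _ s'.prop]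
        exact hss'.symm
      rw [s.prop, ← hp, ac.act_unit]
    calc φ (G.inv (G.mul s.val s'.val))
        = φ (G.mul (G.inv s'.val) (G.inv s.val)) := by rw [G.inv_mul_rev hcomp]
      _ = Tb.mul (φ (G.inv s'.val)) (φ (G.inv s.val)) :=
          hφmul _ _ (hSinv _ s'.prop) (hSinv _ s.prop)
            (by rw [G.src_inv, G.src_inv, ← hiso _ s'.prop, ← hiso _ s.prop]
                exact hss'.symm)
      _ = Tb.mul (φ (G.inv s.val)) (φ (G.inv s'.val)) :=
          Tb.mul_comm _ _
            (by rw [hφp _ (hSinv _ s'.prop), hφp _ (hSinv _ s.prop),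
                  G.src_inv, G.src_inv, ← hiso _ s'.prop, ← hiso _ s.prop]
                exact hss'.symm)
      _ = Tb.mul (φ (G.inv s.val)) (ac.act (π s.val) (φ (G.inv s'.val))) := by
          rw [e1]
  · -- closure under inversion
    intro s
    refine ⟨⟨G.inv s.val, hSinv _ s.prop⟩, rfl, ?_⟩
    apply Subtype.ext
    refine Prod.ext ?_ rfl
    dsimp only [i, TG]
    rw [G.inv_inv]
    have hp : Tb.p (Tb.inv (φ (G.inv s.val))) = G.src s.val := by
      rw [Tb.p_inv, hφp _ (hSinv _ s.prop), G.src_inv, ← hiso _ s.prop]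
    rw [s.prop, H.inv_unit, ← hp, ac.act_unit]
    refine Tb.inv_unique ?_ ?_
    · rw [hφp _ s.prop, hφp _ (hSinv _ s.prop), G.src_inv, hiso _ s.prop]
    · rw [← hφmul _ _ s.prop (hSinv _ s.prop)
        (by rw [G.src_inv]; exact hiso _ s.prop), G.mul_inv, hφunit,
        hφp _ (hSinv _ s.prop), G.src_inv]
  · -- normality
    rintro q w ⟨s, rfl⟩ h1 h2
    have h1' : G.src s.val = G.src q.val.2 := h1
    have h2' : G.rng s.val = G.src q.val.2 := h2
    have hc1 : G.src q.val.2 = G.rng s.val := h2'.symm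
    have hc2 : G.src (G.mul q.val.2 s.val) = G.rng (G.inv q.val.2) := by
      rw [G.src_mul _ _ hc1, G.rng_inv]; exact h1'
    have hπγs : π (G.mul q.val.2 s.val) = π q.val.2 := by
      rw [hmulπ _ _ hc1, s.prop, h1', ← hsrc]
      exact H.mul_unit _
    have hmem : π (G.mul (G.mul q.val.2 s.val) (G.inv q.val.2))
        = H.unit (G.src (G.mul (G.mul q.val.2 s.val) (G.inv q.val.2))) := by
      rw [hmulπ _ _ hc2, hπγs, hinvπ, H.mul_inv, hrng, G.src_mul _ _ hc2,
        G.src_inv]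
    refine ⟨⟨G.mul (G.mul q.val.2 s.val) (G.inv q.val.2), hmem⟩, ?_⟩
    rw [key q (i s) hc1, key _ (TG.inv q) hc2]
    apply Subtype.ext
    refine Prod.ext ?_ rfl
    dsimp only [i, TG]
    have e_cancel : ac.act (π q.val.2)
        (ac.act (H.inv (π q.val.2)) (Tb.inv q.val.1)) = Tb.inv q.val.1 :=
      ac.cancel _ _ (by rw [Tb.p_inv, hrng]; exact q.prop)
    have hpφ : Tb.p (φ (G.inv s.val)) = H.src (π q.val.2) := by
      rw [hsrc, hφp _ (hSinv _ s.prop), G.src_inv]; exact h2'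
    have hpu : Tb.p (ac.act (π q.val.2) (φ (G.inv s.val))) = Tb.p q.val.1 := by
      rw [ac.p_act _ _ hpφ, hrng, q.prop]
    have einv : G.inv (G.mul (G.mul q.val.2 s.val) (G.inv q.val.2))
        = G.mul (G.mul q.val.2 (G.inv s.val)) (G.inv q.val.2) := by
      rw [G.inv_mul_rev hc2, G.inv_inv, G.inv_mul_rev hc1,
        ← G.mul_assoc _ _ _ (by rw [G.rng_inv]; exact h1'.symm)
          (by rw [G.src_inv, G.rng_inv]; exact h2')]
    rw [einv, hφequiv _ _ (hSinv _ s.prop) (by rw [G.rng_inv]; exact h1'),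
      hπγs, e_cancel]
    symm
    calc Tb.mul (Tb.mul q.val.1 (ac.act (π q.val.2) (φ (G.inv s.val))))
          (Tb.inv q.val.1)
        = Tb.mul (Tb.mul (ac.act (π q.val.2) (φ (G.inv s.val))) q.val.1)
          (Tb.inv q.val.1) := by rw [Tb.mul_comm _ _ hpu.symm]
      _ = Tb.mul (ac.act (π q.val.2) (φ (G.inv s.val)))
          (Tb.mul q.val.1 (Tb.inv q.val.1)) :=
          Tb.mul_assoc _ _ _ hpu (Tb.p_inv _).symm
      _ = Tb.mul (ac.act (π q.val.2) (φ (G.inv s.val)))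
          (Tb.one (Tb.p q.val.1)) := by rw [Tb.mul_inv]
      _ = ac.act (π q.val.2) (φ (G.inv s.val)) := by
          rw [← hpu]; exact Tb.mul_one _
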